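/- With N odd, C ⊂ E(k) cyclic of order N, s_O normalized with divisor N·O − C, s_P := τ_{−P}^* s_O for P ∈ C, and g_χ := Σ_{P∈C} χ(P)·s_P for a character χ : C → k^×, one has [−1]^* g_χ = g_{χ^{−1}} for every character χ. -/

import Mathlib

/-- An abstract model of the group of points and the function field of an elliptic curve `E`
over `k`, together with divisors, pullbacks along translations and inversion, and the
pushforward (norm) maps `[n]_*` along the multiplication-by-`n` isogenies. -/
structure CurveFn (k : Type) [Field k] where
  /-- the group of points `E(k)` (all points are closed since `k` is algebraically closed) -/
  Pt : Type
  [grp : AddCommGroup Pt]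
  /-- the function field `k(E)` -/
  F : Type
  [fld : Field F]
  [alg : Algebra k F]
  /-- the divisor of a nonzero rational function -/
  div : Fˣ → (Pt →₀ ℤ)
  div_mul : ∀ f g : Fˣ, div (f * g) = div f + div g
  div_degree : ∀ f : Fˣ, (div f).sum (fun _ n => n) = 0
  /-- the inclusion of the constants `k^× ⊆ k(E)^×` -/
  constU : kˣ →* Fˣ
  constU_spec : ∀ a : kˣ, ((constU a : Fˣ) : F) = algebraMap k F (a : k)
  div_constU : ∀ a : kˣ, div (constU a) = 0
  eq_constU_of_div_eq_zero : ∀ f : Fˣ, div f = 0 → ∃ a : kˣ, f = constU a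
  /-- pullback `τ_P^*` along translation by a point `P` -/
  tau : Pt → (F ≃+* F)
  tau_algebraMap : ∀ (P : Pt) (a : k), tau P (algebraMap k F a) = algebraMap k F a
  tau_zero : tau 0 = RingEquiv.refl F
  tau_add : ∀ P Q : Pt, tau (P + Q) = (tau Q).trans (tau P)
  div_tau : ∀ (P : Pt) (f : Fˣ),
    div (Units.map (tau P).toRingHom.toMonoidHom f) = (div f).mapDomain (fun x => x - P)
  /-- the pushforward (norm) `[n]_*` along multiplication by `n` -/
  pushNorm : ℕ → (Fˣ →* Fˣ)
  div_pushNorm : ∀ (n : ℕ) (f : Fˣ),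
    div (pushNorm n f) = (div f).mapDomain (fun P => (n : ℤ) • P)
  pushNorm_constU : ∀ (n : ℕ) (a : kˣ), pushNorm n (constU a) = constU (a ^ (n ^ 2))
  pushNorm_mul_eq : ∀ m n : ℕ, pushNorm (m * n) = (pushNorm m).comp (pushNorm n)
  pushNorm_tau : ∀ (n : ℕ) (P : Pt) (f : Fˣ),
    pushNorm n (Units.map (tau P).toRingHom.toMonoidHom f)
      = Units.map (tau (n • P)).toRingHom.toMonoidHom (pushNorm n f)
  /-- pullback `[-1]^*` along the inversion map of `E` -/
  negPull : F ≃+* F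
  negPull_algebraMap : ∀ a : k, negPull (algebraMap k F a) = algebraMap k F a
  negPull_negPull : ∀ x : F, negPull (negPull x) = x
  div_negPull : ∀ f : Fˣ,
    div (Units.map negPull.toRingHom.toMonoidHom f) = (div f).mapDomain (fun x => -x)
  negPull_tau : ∀ (P : Pt) (x : F), negPull (tau (-P) x) = tau P (negPull x)

attribute [instance] CurveFn.grp CurveFn.fld CurveFn.alg

variable {k : Type} [Field k]

/-- pullback along translation, on units -/
def CurveFn.tauU (X : CurveFn k) (P : X.Pt) : X.Fˣ →* X.Fˣ :=
  Units.map (X.tau P).toRingHom.toMonoidHom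

/-- pullback along inversion, on units -/
def CurveFn.negPullU (X : CurveFn k) : X.Fˣ →* X.Fˣ :=
  Units.map X.negPull.toRingHom.toMonoidHom

/-- `a` is a root of unity. -/
def IsRootOfUnity {M : Type*} [Monoid M] (a : M) : Prop := ∃ n : ℕ, 0 < n ∧ a ^ n = 1

/-- `f ∈ k(E)^×` is *normalized* if `[n]_* f` is a constant root of unity for some `n ≥ 1`. -/
def CurveFn.Normalized (X : CurveFn k) (f : X.Fˣ) : Prop :=
  ∃ n : ℕ, 0 < n ∧ ∃ u : kˣ, IsRootOfUnity u ∧ X.pushNorm n f = X.constU u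


section AuxLemmas

variable {k : Type} [Field k] (X : CurveFn k)

lemma CurveFn.coe_tauU (P : X.Pt) (f : X.Fˣ) :
    ((X.tauU P f : X.Fˣ) : X.F) = X.tau P (f : X.F) := rfl

lemma CurveFn.coe_negPullU (f : X.Fˣ) :
    ((X.negPullU f : X.Fˣ) : X.F) = X.negPull (f : X.F) := rfl

lemma CurveFn.div_one' : X.div 1 = 0 := by
  have h := X.div_mul 1 1
  rw [mul_one] at h
  have h2 : X.div 1 + X.div 1 = X.div 1 + 0 := by rw [add_zero, ← h]
  exact (add_left_cancel h2).symm ▸ rfl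

lemma CurveFn.div_inv' (f : X.Fˣ) : X.div f⁻¹ = - X.div f := by
  have h := X.div_mul f f⁻¹
  rw [mul_inv_cancel, X.div_one'] at h
  exact eq_neg_of_add_eq_zero_right h.symm

lemma CurveFn.div_prod' {ι : Type} (t : Finset ι) (f : ι → X.Fˣ) :
    X.div (∏ i ∈ t, f i) = ∑ i ∈ t, X.div (f i) := by
  classical
  induction t using Finset.cons_induction with
  | empty => simp [X.div_one']
  | cons a t ha ih => rw [Finset.prod_cons, Finset.sum_cons, X.div_mul, ih]

lemma CurveFn.constU_injective : Function.Injective X.constU := by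
  intro a b hab
  have : ((X.constU a : X.Fˣ) : X.F) = ((X.constU b : X.Fˣ) : X.F) := by rw [hab]
  rw [X.constU_spec, X.constU_spec] at this
  exact Units.ext ((algebraMap k X.F).injective this)

lemma CurveFn.negPullU_constU (a : kˣ) : X.negPullU (X.constU a) = X.constU a := by
  refine Units.ext ?_
  rw [X.coe_negPullU, X.constU_spec, X.negPull_algebraMap]

lemma CurveFn.tauU_constU (P : X.Pt) (a : kˣ) : X.tauU P (X.constU a) = X.constU a := by
  refine Units.ext ?_
  rw [X.coe_tauU, X.constU_spec, X.tau_algebraMap]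

lemma CurveFn.negPullU_tauU (P : X.Pt) (f : X.Fˣ) :
    X.negPullU (X.tauU (-P) f) = X.tauU P (X.negPullU f) := by
  refine Units.ext ?_
  rw [X.coe_negPullU, X.coe_tauU, X.coe_tauU, X.coe_negPullU, X.negPull_tau]

lemma CurveFn.negPullU_negPullU (f : X.Fˣ) : X.negPullU (X.negPullU f) = f := by
  refine Units.ext ?_
  rw [X.coe_negPullU, X.coe_negPullU, X.negPull_negPull]

end AuxLemmas


section AuxLemmas2

variable {k : Type} [Field k] (X : CurveFn k)

lemma CurveFn.div_tauU' (P : X.Pt) (f : X.Fˣ) :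
    X.div (X.tauU P f) = (X.div f).mapDomain (fun x => x - P) := X.div_tau P f

lemma CurveFn.div_negPullU' (f : X.Fˣ) :
    X.div (X.negPullU f) = (X.div f).mapDomain (fun x => -x) := X.div_negPull f

lemma mapDomain_sub' {α β : Type*} (g : α → β) (a b : α →₀ ℤ) :
    Finsupp.mapDomain g (a - b) = Finsupp.mapDomain g a - Finsupp.mapDomain g b :=
  map_sub (Finsupp.mapDomain.addMonoidHom g) a b

lemma mapDomain_finsum' {α β ι : Type*} [Fintype ι] (g : α → β) (f : ι → (α →₀ ℤ)) :
    Finsupp.mapDomain g (∑ i : ι, f i) = ∑ i : ι, Finsupp.mapDomain g (f i) :=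
  map_sum (Finsupp.mapDomain.addMonoidHom g) f Finset.univ

end AuxLemmas2

/-- With `N` odd, `C ⊂ E(k)` cyclic of order `N`, `s_O` normalized with divisor
`N·O − C`, `s_P := τ_{−P}^* s_O` for `P ∈ C`, and `g_χ := Σ_{P∈C} χ(P)·s_P` for a character
`χ : C → k^×`, one has `[−1]^* g_χ = g_{χ^{−1}}` (note `χ⁻¹(P) = χ(−P)`). -/
theorem inversion_swaps_g_chi
    (k : Type) [Field k] [IsAlgClosed k] (X : CurveFn k)
    (N : ℕ) [NeZero N] (hodd : Odd N) (hchar : (N : k) ≠ 0)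
    (ι : ZMod N →+ X.Pt) (hι : Function.Injective ι)
    (s : X.Fˣ) (hs : X.Normalized s)
    (hdiv : X.div s =
      Finsupp.single (0 : X.Pt) (N : ℤ) - ∑ j : ZMod N, Finsupp.single (ι j) (1 : ℤ))
    (χ : AddChar (ZMod N) kˣ) :
    X.negPull (∑ j : ZMod N,
        algebraMap k X.F ((χ j : kˣ) : k) * X.tau (-(ι j)) ((s : X.Fˣ) : X.F))
      = ∑ j : ZMod N,
        algebraMap k X.F ((χ (-j) : kˣ) : k) * X.tau (-(ι j)) ((s : X.Fˣ) : X.F) := by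
  classical
  set T : X.Pt →₀ ℤ := ∑ j : ZMod N, Finsupp.single (ι j) (1 : ℤ) with hTdef
  -- Step 1: divisor of [-1]^* s equals divisor of s
  have h1 : X.div (X.negPullU s) = X.div s := by
    rw [X.div_negPullU', hdiv, mapDomain_sub', mapDomain_finsum']
    simp only [Finsupp.mapDomain_single, neg_zero]
    congr 1
    refine Fintype.sum_equiv (Equiv.neg (ZMod N)) _ _ (fun j => ?_)
    simp [map_neg]
  -- Step 2: [-1]^* s = a * s for a constant a
  have h2 : X.div (X.negPullU s * s⁻¹) = 0 := by
    rw [X.div_mul, X.div_inv', h1, add_neg_cancel]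
  obtain ⟨a, ha⟩ := X.eq_constU_of_div_eq_zero _ h2
  have hns : X.negPullU s = X.constU a * s := by rw [← ha, inv_mul_cancel_right]
  -- Step 3: a * a = 1
  have h3 : a * a = 1 := by
    have h4 := congrArg X.negPullU hns
    rw [X.negPullU_negPullU, map_mul, X.negPullU_constU, hns, ← mul_assoc, ← map_mul] at h4
    have h5 : X.constU (a * a) = 1 := mul_eq_right.mp h4.symm
    have h6 : X.constU (a * a) = X.constU 1 := by rw [h5, map_one]
    exact X.constU_injective h6
  -- Step 4: the product of all translates is constant
  set hfun : X.Fˣ := ∏ j : ZMod N, X.tauU (-(ι j)) s with hfdef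
  have hdivterm : ∀ j : ZMod N,
      X.div (X.tauU (-(ι j)) s) = Finsupp.single (ι j) (N : ℤ) - T := by
    intro j
    rw [X.div_tauU', hdiv, mapDomain_sub', mapDomain_finsum']
    simp only [Finsupp.mapDomain_single, zero_sub, neg_neg]
    congr 1
    refine Fintype.sum_equiv (Equiv.addRight j) _ _ (fun i => ?_)
    simp [map_add, sub_neg_eq_add]
  have hdivh : X.div hfun = 0 := by
    rw [hfdef, X.div_prod', Finset.sum_congr rfl (fun j _ => hdivterm j),
      Finset.sum_sub_distrib, sub_eq_zero]
    have e1 : ∀ j : ZMod N, Finsupp.single (ι j) (N : ℤ)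
        = N • Finsupp.single (ι j) (1 : ℤ) := by
      intro j
      rw [Finsupp.smul_single]
      norm_num
    rw [Finset.sum_congr rfl (fun j _ => e1 j), ← Finset.smul_sum, Finset.sum_const,
      Finset.card_univ, ZMod.card]
  obtain ⟨b, hb⟩ := X.eq_constU_of_div_eq_zero _ hdivh
  -- Step 5: a ^ N = 1
  have h7 : X.negPullU hfun = X.constU a ^ N * hfun := by
    rw [hfdef, map_prod]
    have e2 : ∀ j : ZMod N, X.negPullU (X.tauU (-(ι j)) s)
        = X.constU a * X.tauU (ι j) s := by
      intro j
      rw [X.negPullU_tauU, hns, map_mul, X.tauU_constU]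
    rw [Finset.prod_congr rfl (fun j _ => e2 j), Finset.prod_mul_distrib,
      Finset.prod_const, Finset.card_univ, ZMod.card]
    congr 1
    refine Fintype.prod_equiv (Equiv.neg (ZMod N)) _ _ (fun j => ?_)
    simp [map_neg]
  have h8 : X.negPullU hfun = hfun := by rw [hb, X.negPullU_constU]
  have h9 : X.constU (a ^ N) = X.constU 1 := by
    have := h7.symm.trans h8
    rw [map_pow, map_one]
    exact mul_eq_right.mp this
  have haN : a ^ N = 1 := X.constU_injective h9
  -- Step 6: a = 1, hence [-1]^* s = s
  have ha1 : a = 1 := by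
    obtain ⟨m, hm⟩ := hodd
    have : a ^ N = a := by
      rw [hm, pow_add, pow_mul, pow_one, pow_two, h3, one_pow, one_mul]
    rw [this] at haN
    exact haN
  have hfix : X.negPull (s : X.F) = (s : X.F) := by
    have : X.negPullU s = s := by rw [hns, ha1, map_one, one_mul]
    exact congrArg Units.val this
  -- Final computation
  rw [map_sum]
  have hterm : ∀ j : ZMod N,
      X.negPull (algebraMap k X.F ((χ j : kˣ) : k) * X.tau (-(ι j)) ((s : X.Fˣ) : X.F))
        = algebraMap k X.F ((χ j : kˣ) : k) * X.tau (ι j) ((s : X.Fˣ) : X.F) := by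
    intro j
    rw [map_mul, X.negPull_algebraMap, X.negPull_tau, hfix]
  rw [Finset.sum_congr rfl (fun j _ => hterm j)]
  refine Fintype.sum_equiv (Equiv.neg (ZMod N)) _ _ (fun j => ?_)
  simp [map_neg]
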